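/- Let H be a complex Hilbert space and A : H → H a bounded invertible linear operator that cannot be written as the sum of a coercive operator and a compact operator. Suppose (H*_N)_{N≥1} is a sequence of finite-dimensional subspaces of H with H*_1 ⊆ H*_2 ⊆ ⋯ for which the Galerkin method for A converges. Then there exists a sequence (H_N)_{N≥1} of finite-dimensional subspaces of H with H_1 ⊆ H_2 ⊆ ⋯ such that: (a) the Galerkin method for A and (H_N) does not converge; and (b) for each N ∈ ℕ there exists M_N ∈ ℕ with H*_N ⊆ H_N ⊆ H*_{M_N}. -/

import Mathlib

set_option linter.unusedSectionVars false
set_option maxHeartbeats 2000000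

open scoped ComplexInnerProductSpace
open Filter

variable {H : Type*} [NormedAddCommGroup H] [InnerProductSpace ℂ H] [CompleteSpace H]

/-- A bounded linear operator `A` on a complex Hilbert space is *coercive* if there exists
`α > 0` such that `|⟨Aφ, φ⟩| ≥ α‖φ‖²` for all `φ`. -/
def Coercive (A : H →L[ℂ] H) : Prop :=
  ∃ α : ℝ, 0 < α ∧ ∀ φ : H, α * ‖φ‖ ^ 2 ≤ ‖⟪A φ, φ⟫‖

/-- `x` is a Galerkin solution in the subspace `V` for the equation `A φ = g`. -/
def IsGalerkinSolution (A : H →L[ℂ] H) (V : Submodule ℂ H) (g x : H) : Prop :=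
  x ∈ V ∧ ∀ ψ ∈ V, ⟪A x, ψ⟫ = ⟪g, ψ⟫

/-- The Galerkin method for `A` and the sequence of subspaces `V N` converges. -/
def GalerkinConverges (A : H →L[ℂ] H) (V : ℕ → Submodule ℂ H) : Prop :=
  ∀ g : H,
    (∃ N₀ : ℕ, ∀ N : ℕ, N₀ ≤ N → ∃! x : H, IsGalerkinSolution A (V N) g x) ∧
    ∀ φ : ℕ → H, (∀ᶠ N in atTop, IsGalerkinSolution A (V N) g (φ N)) →
      ∀ x : H, A x = g → Tendsto φ atTop (nhds x)

/-- If `A` is invertible but not coercive-plus-compact, and the Galerkin method converges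
for an increasing sequence `(Vs N)` of finite-dimensional subspaces, then there is an
increasing sequence `(V N)` of finite-dimensional subspaces, sandwiched between the `Vs N`
(i.e. `Vs N ⊆ V N ⊆ Vs (M N)` for some `M N`), for which the Galerkin method does not
converge. -/


lemma isCompactOperator_of_range_le (f : H →L[ℂ] H) (W : Submodule ℂ H)
    [FiniteDimensional ℂ W] (h : ∀ x, f x ∈ W) : IsCompactOperator ⇑f := by
  refine ⟨(↑) '' (Metric.closedBall (0 : W) (‖f‖ + 1)), ?_, ?_⟩
  · exact (isCompact_closedBall _ _).image continuous_subtype_val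
  · refine Filter.mem_of_superset (Metric.ball_mem_nhds 0 one_pos) ?_
    intro x hx
    refine ⟨⟨f x, h x⟩, ?_, rfl⟩
    simp only [Metric.mem_closedBall, dist_zero_right]
    calc ‖(⟨f x, h x⟩ : W)‖ = ‖f x‖ := rfl
      _ ≤ ‖f‖ * ‖x‖ := f.le_opNorm x
      _ ≤ ‖f‖ * 1 := by
          refine mul_le_mul_of_nonneg_left ?_ (norm_nonneg f)
          exact le_of_lt (by simpa [dist_zero_right] using hx)
      _ ≤ ‖f‖ + 1 := by nlinarith [norm_nonneg f]

lemma mem_of_proj_zero {W : Submodule ℂ H} [FiniteDimensional ℂ W] {x : H}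
    (h : Submodule.orthogonalProjectionOnto W x = 0) : ∀ ψ ∈ W, ⟪x, ψ⟫ = 0 := by
  intro ψ hψ
  have h1 : x - (Submodule.orthogonalProjectionOnto W x : H) ∈ Wᗮ := Submodule.sub_starProjection_mem_orthogonal x
  rw [h] at h1
  simp only [Submodule.coe_zero, sub_zero] at h1
  exact (Submodule.mem_orthogonal' W x).mp h1 ψ hψ

lemma exists_solution_operator (A : H →L[ℂ] H) (W : Submodule ℂ H) [FiniteDimensional ℂ W]
    (hinj : ∀ z ∈ W, (∀ ψ ∈ W, ⟪A z, ψ⟫ = 0) → z = 0) :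
    ∃ S : H →L[ℂ] H, (∀ g, IsGalerkinSolution A W g (S g)) ∧
      (∀ g x, IsGalerkinSolution A W g x → x = S g) := by
  classical
  set Φ : W →ₗ[ℂ] W := {
    toFun := fun v => Submodule.orthogonalProjectionOnto W (A v)
    map_add' := by intro a b; simp [map_add]
    map_smul' := by intro c a; simp [map_smul] }
  have hΦ : Function.Injective Φ := by
    rw [← LinearMap.ker_eq_bot, LinearMap.ker_eq_bot']
    intro z hz
    have hz' : Submodule.orthogonalProjectionOnto W (A z) = 0 := hz
    have := hinj z z.2 (fun ψ hψ => mem_of_proj_zero hz' ψ hψ)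
    exact Subtype.ext this
  have hbij : Function.Bijective Φ := ⟨hΦ, (LinearMap.injective_iff_surjective).mp hΦ⟩
  set e : W ≃ₗ[ℂ] W := LinearEquiv.ofBijective Φ hbij
  set S : H →L[ℂ] H := W.subtypeL.comp
    ((e.symm.toLinearMap.toContinuousLinearMap).comp (Submodule.orthogonalProjectionOnto W))
  have hSmem : ∀ g, S g ∈ W := fun g => (e.symm (Submodule.orthogonalProjectionOnto W g) : W).2
  have hSsol : ∀ g, ∀ ψ ∈ W, ⟪A (S g), ψ⟫ = ⟪g, ψ⟫ := by
    intro g ψ hψ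
    have h1 : Φ (e.symm (Submodule.orthogonalProjectionOnto W g)) = Submodule.orthogonalProjectionOnto W g :=
      e.apply_symm_apply _
    have h2 : Submodule.orthogonalProjectionOnto W (A (S g)) = Submodule.orthogonalProjectionOnto W g := h1
    have h3 : Submodule.orthogonalProjectionOnto W (A (S g) - g) = 0 := by
      rw [map_sub, h2, sub_self]
    have := mem_of_proj_zero h3 ψ hψ
    rw [inner_sub_left] at this
    exact sub_eq_zero.mp this
  refine ⟨S, fun g => ⟨hSmem g, hSsol g⟩, ?_⟩
  intro g x hx
  have hm : x - S g ∈ W := W.sub_mem hx.1 (hSmem g)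
  have h0 : ∀ ψ ∈ W, ⟪A (x - S g), ψ⟫ = 0 := by
    intro ψ hψ
    rw [map_sub, inner_sub_left, hx.2 ψ hψ, hSsol g ψ hψ, sub_self]
  have := hinj _ hm h0
  exact sub_eq_zero.mp this


private lemma expand_inner (T : H →L[ℂ] H) (c₁ c₂ : ℂ) (x y : H) :
    ⟪T (c₁ • x + c₂ • y), c₁ • x + c₂ • y⟫ =
      (starRingEnd ℂ) c₁ * c₁ * ⟪T x, x⟫ + (starRingEnd ℂ) c₁ * c₂ * ⟪T x, y⟫ +
      (starRingEnd ℂ) c₂ * c₁ * ⟪T y, x⟫ + (starRingEnd ℂ) c₂ * c₂ * ⟪T y, y⟫ := by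
  simp only [map_add, map_smul, inner_add_left, inner_add_right, inner_smul_left,
    inner_smul_right]
  ring

private lemma expand_inner' (c₁ c₂ : ℂ) (x y : H) :
    ⟪(c₁ • x + c₂ • y : H), c₁ • x + c₂ • y⟫ =
      (starRingEnd ℂ) c₁ * c₁ * ⟪x, x⟫ + (starRingEnd ℂ) c₁ * c₂ * ⟪x, y⟫ +
      (starRingEnd ℂ) c₂ * c₁ * ⟪y, x⟫ + (starRingEnd ℂ) c₂ * c₂ * ⟪y, y⟫ := by
  simp only [inner_add_left, inner_add_right, inner_smul_left, inner_smul_right]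
  ring

private lemma scalar_identity (p q r₁ r₂ m γ γ' m' lam beta C S : ℂ)
    (hγ : γ' * γ = 1) (hpy : C ^ 2 + S ^ 2 = 1)
    (hσ : γ' * (r₁ - p * m) + γ * (r₂ - p * m') = lam * (q - p))
    (hβ : γ' * m + γ * m' = 2 * beta) :
    (γ' * C) * (γ * C) * p + (γ' * C) * S * r₁ + S * (γ * C) * r₂ + S * S * q =
      p * (1 + 2 * C * S * beta) + (q - p) * (S ^ 2 + C * S * lam) := by
  linear_combination (C * S) * hσ + (p * C * S) * hβ + (p * C ^ 2) * hγ + p * hpy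

private lemma scalar_identity' (m γ γ' m' beta C S : ℂ)
    (hγ : γ' * γ = 1) (hpy : C ^ 2 + S ^ 2 = 1)
    (hβ : γ' * m + γ * m' = 2 * beta) :
    (γ' * C) * (γ * C) + (γ' * C) * S * m + S * (γ * C) * m' + S * S =
      1 + 2 * C * S * beta := by
  linear_combination (C * S) * hβ + (C ^ 2) * hγ + hpy

/-- Toeplitz–Hausdorff, two-dimensional version. -/
lemma toeplitz_hausdorff_two (T : H →L[ℂ] H) {x y : H} (hx : ‖x‖ = 1) (hy : ‖y‖ = 1)
    {t : ℝ} (ht0 : 0 ≤ t) (ht1 : t ≤ 1) :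
    ∃ z : H, z ∈ Submodule.span ℂ {x, y} ∧ ‖z‖ = 1 ∧
      ⟪T z, z⟫ = (1 - (t : ℂ)) * ⟪T x, x⟫ + (t : ℂ) * ⟪T y, y⟫ := by
  classical
  by_cases hpq : ⟪T x, x⟫ = ⟪T y, y⟫
  · exact ⟨x, Submodule.subset_span (by simp), hx, by rw [hpq]; ring⟩
  obtain ⟨p, hp⟩ : ∃ c : ℂ, c = ⟪T x, x⟫ := ⟨_, rfl⟩
  obtain ⟨q, hq⟩ : ∃ c : ℂ, c = ⟪T y, y⟫ := ⟨_, rfl⟩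
  obtain ⟨r₁, hr₁⟩ : ∃ c : ℂ, c = ⟪T x, y⟫ := ⟨_, rfl⟩
  obtain ⟨r₂, hr₂⟩ : ∃ c : ℂ, c = ⟪T y, x⟫ := ⟨_, rfl⟩
  obtain ⟨m, hm⟩ : ∃ c : ℂ, c = ⟪x, y⟫ := ⟨_, rfl⟩
  have hpq' : p ≠ q := by rw [hp, hq]; exact hpq
  have hd0 : q - p ≠ 0 := sub_ne_zero.mpr (Ne.symm hpq')
  -- ‖m‖ < 1
  have hm1 : ‖m‖ < 1 := by
    rcases lt_or_ge ‖m‖ 1 with h | h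
    · exact h
    · exfalso
      have hle : ‖m‖ ≤ 1 := by
        have := norm_inner_le_norm (𝕜 := ℂ) x y
        rw [hx, hy, mul_one] at this
        rw [hm]; exact this
      have heq : ‖⟪x, y⟫‖ = ‖x‖ * ‖y‖ := by
        rw [hx, hy, mul_one, ← hm]; exact le_antisymm hle h
      have hx0 : x ≠ 0 := fun h0 => by simp [h0] at hx
      have hy0 : y ≠ 0 := fun h0 => by simp [h0] at hy
      obtain ⟨r, hr0, hyr⟩ := (norm_inner_eq_norm_iff hx0 hy0).mp heq
      have hr1 : ‖r‖ = 1 := by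
        have : ‖y‖ = ‖r‖ * ‖x‖ := by rw [hyr, norm_smul]
        rw [hx, hy, mul_one] at this; exact this.symm
      apply hpq
      rw [hyr, map_smul, inner_smul_left, inner_smul_right, ← mul_assoc, RCLike.conj_mul,
        hr1]
      norm_num
  -- the rotation γ
  obtain ⟨ζ, hζ⟩ : ∃ c : ℂ, c = (r₂ - p * (starRingEnd ℂ) m) / (q - p) -
      (starRingEnd ℂ) ((r₁ - p * m) / (q - p)) := ⟨_, rfl⟩
  obtain ⟨γ, hγdef⟩ : ∃ c : ℂ, c = if ζ = 0 then 1 else (starRingEnd ℂ) ζ / (‖ζ‖ : ℂ) :=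
    ⟨_, rfl⟩
  have hγn : ‖γ‖ = 1 := by
    rw [hγdef]
    by_cases h0 : ζ = 0
    · simp [h0]
    · rw [if_neg h0]
      rw [norm_div, RCLike.norm_conj]
      simp only [Complex.norm_real, abs_norm]
      rw [Real.norm_eq_abs, abs_norm]
      exact div_self (norm_ne_zero_iff.mpr h0)
  have hγ : (starRingEnd ℂ) γ * γ = 1 := by
    rw [RCLike.conj_mul, hγn]; norm_num
  have hγζ : (γ * ζ).im = 0 := by
    by_cases h0 : ζ = 0
    · simp [h0]
    · rw [hγdef, if_neg h0, div_mul_eq_mul_div, mul_comm ((starRingEnd ℂ) ζ) ζ,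
        Complex.mul_conj, ← Complex.ofReal_div, Complex.ofReal_im]
  -- σ is real
  obtain ⟨σ, hσdef⟩ : ∃ c : ℂ, c = ((starRingEnd ℂ) γ * (r₁ - p * m) +
      γ * (r₂ - p * (starRingEnd ℂ) m)) / (q - p) := ⟨_, rfl⟩
  have hσim : σ.im = 0 := by
    have hcw : (starRingEnd ℂ) ((starRingEnd ℂ) γ * ((r₁ - p * m) / (q - p))) =
        γ * (starRingEnd ℂ) ((r₁ - p * m) / (q - p)) := by
      rw [map_mul, Complex.conj_conj]
    have hsum : σ = ((starRingEnd ℂ) γ * ((r₁ - p * m) / (q - p))) +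
        (starRingEnd ℂ) ((starRingEnd ℂ) γ * ((r₁ - p * m) / (q - p))) + γ * ζ := by
      rw [hcw, hζ, hσdef]; ring
    rw [hsum]
    simp only [Complex.add_im, Complex.add_conj]
    simp [hγζ]
  obtain ⟨lam, hlamdef⟩ : ∃ c : ℝ, c = σ.re := ⟨_, rfl⟩
  have hσeq : (starRingEnd ℂ) γ * (r₁ - p * m) + γ * (r₂ - p * (starRingEnd ℂ) m) =
      (lam : ℂ) * (q - p) := by
    have h1 : σ = (lam : ℂ) := by
      apply Complex.ext
      · simp [hlamdef]
      · simp [hσim]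
    rw [hσdef, div_eq_iff hd0] at h1
    exact h1
  obtain ⟨beta, hbetadef⟩ : ∃ c : ℝ, c = ((starRingEnd ℂ) γ * m).re := ⟨_, rfl⟩
  have hβeq : (starRingEnd ℂ) γ * m + γ * (starRingEnd ℂ) m = 2 * (beta : ℂ) := by
    have h2 : γ * (starRingEnd ℂ) m = (starRingEnd ℂ) ((starRingEnd ℂ) γ * m) := by
      rw [map_mul, Complex.conj_conj]
    rw [h2, Complex.add_conj, hbetadef]
    push_cast
    ring
  have hbm : |beta| < 1 := by
    calc |beta| = |((starRingEnd ℂ) γ * m).re| := by rw [hbetadef]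
      _ ≤ ‖(starRingEnd ℂ) γ * m‖ := Complex.abs_re_le_norm _
      _ = ‖m‖ := by rw [norm_mul, RCLike.norm_conj, hγn, one_mul]
      _ < 1 := hm1
  -- the real path
  have hden : ∀ s : ℝ, 0 < 1 + 2 * Real.cos s * Real.sin s * beta := by
    intro s
    have h1 : |2 * Real.cos s * Real.sin s| ≤ 1 := by
      have h2 := Real.neg_one_le_sin (2 * s)
      have h3 := Real.sin_le_one (2 * s)
      rw [Real.sin_two_mul] at h2 h3
      rw [abs_le]; constructor <;> nlinarith
    have h2 : |2 * Real.cos s * Real.sin s * beta| < 1 := by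
      rcases eq_or_ne beta 0 with hb | hb
      · simp [hb]
      · calc |2 * Real.cos s * Real.sin s * beta|
            = |2 * Real.cos s * Real.sin s| * |beta| := abs_mul _ _
          _ ≤ 1 * |beta| := mul_le_mul_of_nonneg_right h1 (abs_nonneg _)
          _ < 1 := by rw [one_mul]; exact hbm
    have h3 := (abs_lt.mp h2).1
    linarith
  obtain ⟨gfun, hgfun⟩ : ∃ f : ℝ → ℝ, f = fun s =>
      (Real.sin s ^ 2 + Real.cos s * Real.sin s * lam) /
        (1 + 2 * Real.cos s * Real.sin s * beta) := ⟨_, rfl⟩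
  have hgc : Continuous gfun := by
    rw [hgfun]
    apply Continuous.div
    · fun_prop
    · fun_prop
    · intro s; exact ne_of_gt (hden s)
  have hg0 : gfun 0 = 0 := by simp [hgfun]
  have hg1 : gfun (Real.pi / 2) = 1 := by
    rw [hgfun]; simp [Real.sin_pi_div_two, Real.cos_pi_div_two]
  have hmem : t ∈ Set.Icc (gfun 0) (gfun (Real.pi / 2)) := by
    rw [hg0, hg1]; exact ⟨ht0, ht1⟩
  obtain ⟨s, _, hgs⟩ := intermediate_value_Icc (by positivity : (0:ℝ) ≤ Real.pi / 2)
    hgc.continuousOn hmem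
  -- assemble
  have hnum_t : Real.sin s ^ 2 + Real.cos s * Real.sin s * lam =
      t * (1 + 2 * Real.cos s * Real.sin s * beta) := by
    rw [hgfun] at hgs
    simp only at hgs
    rw [div_eq_iff (ne_of_gt (hden s))] at hgs
    exact hgs
  set C : ℝ := Real.cos s with hC
  set S : ℝ := Real.sin s with hS
  have hpyR : C ^ 2 + S ^ 2 = 1 := by rw [hC, hS]; exact Real.cos_sq_add_sin_sq s
  have hpyC : ((C : ℂ)) ^ 2 + ((S : ℂ)) ^ 2 = 1 := by exact_mod_cast hpyR
  set c₁ : ℂ := γ * (C : ℂ) with hc₁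
  set c₂ : ℂ := ((S : ℝ) : ℂ) with hc₂
  set z : H := c₁ • x + c₂ • y with hz
  have hcc₁ : (starRingEnd ℂ) c₁ = (starRingEnd ℂ) γ * (C : ℂ) := by
    rw [hc₁, map_mul, Complex.conj_ofReal]
  have hcc₂ : (starRingEnd ℂ) c₂ = ((S : ℝ) : ℂ) := Complex.conj_ofReal _
  have hden' : (0:ℝ) < 1 + 2 * C * S * beta := hden s
  -- the two inner product computations
  have hzz : ⟪(z : H), z⟫ = (((1 + 2 * C * S * beta : ℝ)) : ℂ) := by
    rw [hz, expand_inner' c₁ c₂ x y]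
    have hxx : ⟪x, x⟫ = (1 : ℂ) := by
      rw [inner_self_eq_norm_sq_to_K, hx]; norm_num
    have hyy : ⟪y, y⟫ = (1 : ℂ) := by
      rw [inner_self_eq_norm_sq_to_K, hy]; norm_num
    have hyx : ⟪y, x⟫ = (starRingEnd ℂ) m := by rw [hm, inner_conj_symm]
    rw [hxx, hyy, hyx, ← hm, hcc₁, hcc₂, hc₁, hc₂]
    push_cast
    linear_combination scalar_identity' m γ ((starRingEnd ℂ) γ) ((starRingEnd ℂ) m)
      (beta : ℂ) (C : ℂ) (S : ℂ) hγ hpyC hβeq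
  have hTzz : ⟪T z, z⟫ = p * (((1 + 2 * C * S * beta : ℝ)) : ℂ) +
      (q - p) * (((S ^ 2 + C * S * lam : ℝ)) : ℂ) := by
    rw [hz, expand_inner T c₁ c₂ x y]
    rw [← hp, ← hq, ← hr₁, ← hr₂]
    have hyx : ⟪T y, x⟫ = r₂ := hr₂.symm
    rw [hcc₁, hcc₂, hc₁, hc₂]
    push_cast
    linear_combination scalar_identity p q r₁ r₂ m γ ((starRingEnd ℂ) γ)
      ((starRingEnd ℂ) m) (lam : ℂ) (beta : ℂ) (C : ℂ) (S : ℂ) hγ hpyC hσeq hβeq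
  have hnz2 : ‖z‖ ^ 2 = 1 + 2 * C * S * beta := by
    have h1 := inner_self_eq_norm_mul_norm (𝕜 := ℂ) z
    rw [hzz] at h1
    simp only [RCLike.re_to_complex, Complex.ofReal_re] at h1
    rw [pow_two]; linarith
  have hnpos : 0 < ‖z‖ := by
    rcases (norm_nonneg z).lt_or_eq with h | h
    · exact h
    · exfalso; rw [← h] at hnz2; simp at hnz2; linarith [hnz2, hden']
  refine ⟨((‖z‖⁻¹ : ℝ) : ℂ) • z, ?_, ?_, ?_⟩
  · apply Submodule.smul_mem
    rw [hz]
    apply Submodule.add_mem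
    · exact Submodule.smul_mem _ _ (Submodule.subset_span (Set.mem_insert _ _))
    · exact Submodule.smul_mem _ _ (Submodule.subset_span
        (Set.mem_insert_of_mem _ rfl))
  · rw [norm_smul, Complex.norm_real, Real.norm_eq_abs, abs_inv, abs_norm]
    field_simp
  · rw [map_smul, inner_smul_left, inner_smul_right, Complex.conj_ofReal, ← mul_assoc]
    rw [hTzz, ← hp, ← hq]
    have hcast : ((‖z‖ : ℂ))⁻¹ * ((‖z‖ : ℂ))⁻¹ * (((1 + 2 * C * S * beta : ℝ)) : ℂ) = 1 := by
      have h1 : ((‖z‖ : ℂ)) ^ 2 = (((1 + 2 * C * S * beta : ℝ)) : ℂ) := by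
        exact_mod_cast congrArg (fun r : ℝ => ((r : ℂ))) hnz2
      have h2 : ((‖z‖ : ℂ)) ≠ 0 := by
        simp only [ne_eq, Complex.ofReal_eq_zero, norm_eq_zero]
        intro h; rw [h] at hnpos; simp at hnpos
      rw [← h1]
      field_simp
    have hnumc : (((S ^ 2 + C * S * lam : ℝ)) : ℂ) =
        (t : ℂ) * (((1 + 2 * C * S * beta : ℝ)) : ℂ) := by
      rw [show (S ^ 2 + C * S * lam : ℝ) = t * (1 + 2 * C * S * beta) from by
        rw [hC, hS]; rw [hC, hS] at hnum_t; linarith [hnum_t]]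
      push_cast; ring
    push_cast at hcast hnumc ⊢
    linear_combination (p + ((t:ℂ)) * (q - p)) * hcast + (q - p) *
      (((‖z‖:ℂ))⁻¹ * ((‖z‖:ℂ))⁻¹) * hnumc

lemma exists_halfplane (T : H →L[ℂ] H) (W : Submodule ℂ H) {ε : ℝ} (hε : 0 < ε)
    (hne : ∃ w ∈ W, ‖w‖ = 1) (hb : ∀ w ∈ W, ‖w‖ = 1 → ε ≤ ‖⟪T w, w⟫‖) :
    ∃ μ : ℂ, ‖μ‖ = 1 ∧ ∀ w ∈ W, ε * ‖w‖ ^ 2 ≤ (μ * ⟪T w, w⟫).re := by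
  classical
  set Cs : Set ℂ := {z | ∃ w, w ∈ W ∧ ‖w‖ = 1 ∧ z = ⟪T w, w⟫} with hCs
  have hconv : Convex ℝ Cs := by
    intro z₁ hz₁ z₂ hz₂ a b ha hb' hab
    obtain ⟨w₁, hw₁, hwn₁, hz₁⟩ := hz₁
    obtain ⟨w₂, hw₂, hwn₂, hz₂⟩ := hz₂
    obtain ⟨z, hzs, hzn, hzv⟩ := toeplitz_hausdorff_two T hwn₁ hwn₂ hb'
      (by linarith : b ≤ 1)
    refine ⟨z, ?_, hzn, ?_⟩
    · have : Submodule.span ℂ {w₁, w₂} ≤ W := by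
        rw [Submodule.span_le]
        intro u hu
        rcases hu with h | h
        · rw [h]; exact hw₁
        · rw [Set.mem_singleton_iff.mp h]; exact hw₂
      exact this hzs
    · rw [hzv, hz₁, hz₂]
      have hab' : (1 : ℂ) - (b : ℂ) = (a : ℂ) := by
        have : (a : ℝ) = 1 - b := by linarith
        rw [this]; push_cast; ring
      rw [hab']
      simp [Complex.real_smul]
  have hdisj : Disjoint (Metric.ball (0 : ℂ) ε) Cs := by
    rw [Set.disjoint_left]
    intro z hz hzC
    obtain ⟨w, hw, hwn, hzv⟩ := hzC
    have := hb w hw hwn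
    rw [← hzv] at this
    rw [Metric.mem_ball, dist_zero_right] at hz
    linarith
  obtain ⟨f, u, hfball, hfC⟩ := geometric_hahn_banach_open (convex_ball 0 ε)
    Metric.isOpen_ball hconv hdisj
  -- representation of f
  set b₀ : ℂ := ⟨f 1, f Complex.I⟩ with hb₀
  have hrep : ∀ z : ℂ, f z = b₀.re * z.re + b₀.im * z.im := by
    intro z
    have hdecomp : z = z.re • (1 : ℂ) + z.im • Complex.I := by
      apply Complex.ext <;> simp
    calc f z = f (z.re • (1 : ℂ) + z.im • Complex.I) := by rw [← hdecomp]
      _ = z.re * f 1 + z.im * f Complex.I := by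
          rw [map_add, map_smul, map_smul]; simp
      _ = b₀.re * z.re + b₀.im * z.im := by rw [hb₀]; ring
  have hu0 : 0 < u := by
    have := hfball 0 (by simp [Metric.mem_ball, hε])
    rwa [map_zero] at this
  have hb₀0 : b₀ ≠ 0 := by
    intro h0
    obtain ⟨w, hw, hwn⟩ := hne
    have hC : ⟪T w, w⟫ ∈ Cs := ⟨w, hw, hwn, rfl⟩
    have := hfC _ hC
    rw [hrep, h0] at this
    simp at this
    linarith
  have hnb₀ : 0 < ‖b₀‖ := norm_pos_iff.mpr hb₀0
  -- u ≥ ε * ‖b₀‖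
  have hεb : ε * ‖b₀‖ ≤ u := by
    by_contra hcon
    push_neg at hcon
    set r : ℝ := u / ‖b₀‖ with hr
    have hr0 : 0 ≤ r := le_of_lt (div_pos hu0 hnb₀)
    have hrε : r < ε := by
      rw [hr, div_lt_iff₀ hnb₀]
      linarith [hcon]
    set a : ℂ := (r / ‖b₀‖ : ℝ) • b₀ with ha
    have haball : a ∈ Metric.ball (0 : ℂ) ε := by
      rw [Metric.mem_ball, dist_zero_right, ha, norm_smul]
      rw [Real.norm_eq_abs, abs_of_nonneg (by positivity)]
      rw [div_mul_cancel₀ _ (ne_of_gt hnb₀)]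
      exact hrε
    have hfa : f a = u := by
      rw [ha, map_smul, smul_eq_mul, hrep]
      have hnsq : b₀.re * b₀.re + b₀.im * b₀.im = ‖b₀‖ ^ 2 := by
        rw [← Complex.normSq_apply, Complex.normSq_eq_norm_sq]
      rw [hnsq, hr]
      have hA : ‖b₀‖ ≠ 0 := by
        exact ne_of_gt hnb₀
      field_simp
    have := hfball a haball
    rw [hfa] at this
    exact lt_irrefl u this
  -- the direction μ
  refine ⟨(starRingEnd ℂ) b₀ * ((‖b₀‖⁻¹ : ℝ) : ℂ), ?_, ?_⟩
  · rw [norm_mul, RCLike.norm_conj, Complex.norm_real, Real.norm_eq_abs, abs_inv, abs_norm]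
    rw [mul_inv_cancel₀ (ne_of_gt hnb₀)]
  · intro w hw
    rcases eq_or_ne w 0 with h0 | h0
    · simp [h0]
    · have hwn : 0 < ‖w‖ := norm_pos_iff.mpr h0
      set w' : H := ((‖w‖⁻¹ : ℝ) : ℂ) • w with hw'
      have hw'W : w' ∈ W := Submodule.smul_mem _ _ hw
      have hw'n : ‖w'‖ = 1 := by
        rw [hw', norm_smul, Complex.norm_real, Real.norm_eq_abs, abs_inv, abs_norm]
        field_simp
      have hC : ⟪T w', w'⟫ ∈ Cs := ⟨w', hw'W, hw'n, rfl⟩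
      have hfc := hfC _ hC
      have hre : f ⟪T w', w'⟫ = ((starRingEnd ℂ) b₀ * ⟪T w', w'⟫).re := by
        rw [hrep]
        simp [Complex.mul_re, Complex.conj_re, Complex.conj_im]
        try ring
      have hval : ⟪T w', w'⟫ = ((((‖w‖⁻¹ : ℝ)) ^ 2 : ℝ) : ℂ) * ⟪T w, w⟫ := by
        rw [hw', map_smul, inner_smul_left, inner_smul_right, Complex.conj_ofReal]
        push_cast
        ring
      -- combine
      have key : u ≤ ((starRingEnd ℂ) b₀ * ⟪T w', w'⟫).re := by rw [← hre]; exact hfc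
      have key2 : ε * ‖b₀‖ ≤ ((starRingEnd ℂ) b₀ * ⟪T w', w'⟫).re := le_trans hεb key
      rw [hval] at key2
      rw [show (starRingEnd ℂ) b₀ * (((((‖w‖⁻¹:ℝ)) ^ 2 : ℝ) : ℂ) * ⟪T w, w⟫) =
        ((((‖w‖⁻¹:ℝ)) ^ 2 : ℝ) : ℂ) * ((starRingEnd ℂ) b₀ * ⟪T w, w⟫) from by ring,
        Complex.re_ofReal_mul] at key2
      -- key2 : ε * ‖b₀‖ ≤ (‖w‖⁻¹)^2 * (conj b₀ * ⟪Tw,w⟫).re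
      have key3 : ε * ‖b₀‖ * ‖w‖ ^ 2 ≤ ((starRingEnd ℂ) b₀ * ⟪T w, w⟫).re := by
        have k := mul_le_mul_of_nonneg_right key2 (sq_nonneg ‖w‖)
        have h1 : (‖w‖⁻¹ : ℝ) ^ 2 * ((starRingEnd ℂ) b₀ * ⟪T w, w⟫).re * ‖w‖ ^ 2 =
            ((starRingEnd ℂ) b₀ * ⟪T w, w⟫).re := by
          field_simp
        linarith [k, h1.le, h1.ge]
      have hrw : (starRingEnd ℂ) b₀ * ((‖b₀‖⁻¹ : ℝ) : ℂ) * ⟪T w, w⟫ =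
          ((‖b₀‖⁻¹ : ℝ) : ℂ) * ((starRingEnd ℂ) b₀ * ⟪T w, w⟫) := by ring
      rw [hrw, Complex.re_ofReal_mul]
      have h4 := mul_le_mul_of_nonneg_left key3 (le_of_lt (inv_pos.mpr hnb₀))
      have h5 : ‖b₀‖⁻¹ * (ε * ‖b₀‖ * ‖w‖ ^ 2) = ε * ‖w‖ ^ 2 := by
        rw [show ‖b₀‖⁻¹ * (ε * ‖b₀‖ * ‖w‖ ^ 2) = (‖b₀‖⁻¹ * ‖b₀‖) * (ε * ‖w‖ ^ 2) from by
          ring, inv_mul_cancel₀ (ne_of_gt hnb₀), one_mul]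
      linarith [h4, h5.symm.le, h5.le]


theorem exists_sandwiched_subspaces_galerkin_not_converges
    (A : H →L[ℂ] H)
    (hA : ∃ B : H →L[ℂ] H, B.comp A = ContinuousLinearMap.id ℂ H ∧
      A.comp B = ContinuousLinearMap.id ℂ H)
    (hnc : ¬ ∃ A₀ K : H →L[ℂ] H, Coercive A₀ ∧ IsCompactOperator ⇑K ∧ A = A₀ + K)
    (Vs : ℕ → Submodule ℂ H) (hfd : ∀ N, FiniteDimensional ℂ (Vs N))
    (hmono : Monotone Vs) (hconv : GalerkinConverges A Vs) :
    ∃ V : ℕ → Submodule ℂ H, (∀ N, FiniteDimensional ℂ (V N)) ∧ Monotone V ∧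
      ¬ GalerkinConverges A V ∧ ∀ N : ℕ, Vs N ≤ V N ∧ ∃ M : ℕ, V N ≤ Vs M := by
  classical
  obtain ⟨B, hBA, hAB⟩ := hA
  have hABapp : ∀ g : H, A (B g) = g := by
    intro g
    have := DFunLike.congr_fun hAB g
    simpa using this
  haveI : ∀ N, FiniteDimensional ℂ (Vs N) := hfd
  -- density of the union
  have hdense : ∀ x : H, x ∈ closure (⋃ N, (Vs N : Set H)) := by
    intro x
    obtain ⟨N₀, hN₀⟩ := (hconv (A x)).1
    set φ : ℕ → H := fun j =>
      if hj : ∃ y, IsGalerkinSolution A (Vs j) (A x) y then hj.choose else 0 with hφ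
    have hev : ∀ᶠ j in atTop, IsGalerkinSolution A (Vs j) (A x) (φ j) := by
      rw [eventually_atTop]
      refine ⟨N₀, fun j hj => ?_⟩
      have h := (hN₀ j hj).exists
      simp only [hφ, dif_pos h]
      exact h.choose_spec
    have htd := (hconv (A x)).2 φ hev x rfl
    refine mem_closure_of_tendsto htd ?_
    filter_upwards [hev] with j hj
    exact Set.mem_iUnion.mpr ⟨j, hj.1⟩
  obtain ⟨Nstar, hNstar⟩ := (hconv 0).1
  have hinjVs : ∀ N, Nstar ≤ N → ∀ z ∈ Vs N, (∀ ψ ∈ Vs N, ⟪A z, ψ⟫ = 0) → z = 0 := by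
    intro N hN z hz hzp
    have hEU := hNstar N hN
    have s1 : IsGalerkinSolution A (Vs N) 0 z :=
      ⟨hz, fun ψ hψ => by rw [hzp ψ hψ, inner_zero_left]⟩
    have s2 : IsGalerkinSolution A (Vs N) 0 0 :=
      ⟨zero_mem _, fun ψ hψ => by rw [map_zero]⟩
    exact hEU.unique s1 s2
  by_cases hP : ∀ ε : ℝ, 0 < ε → ∀ N' : ℕ, ∃ N, N' ≤ N ∧ ∃ w M e, ‖w‖ = 1 ∧
      w ∈ (Vs N)ᗮ ∧ w ∈ Vs M ∧ e ∈ Vs N ∧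
      (∀ ψ ∈ Vs N, ⟪A e, ψ⟫ = ⟪A w, ψ⟫) ∧ ‖⟪A (w - e), w⟫‖ ≤ ε
  · -- Case B1: build the bad sequence
    have hP' : ∀ (k N' : ℕ), ∃ N, N' ≤ N ∧ ∃ w M e, ‖w‖ = 1 ∧ w ∈ (Vs N)ᗮ ∧
        w ∈ Vs M ∧ e ∈ Vs N ∧ (∀ ψ ∈ Vs N, ⟪A e, ψ⟫ = ⟪A w, ψ⟫) ∧
        ‖⟪A (w - e), w⟫‖ ≤ 1 / (k + 1) :=
      fun k N' => hP (1 / (k + 1)) (by positivity) N'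
    choose NF hNFle wF MF eF hw1 hw2 hw3 he1 he2 he3 using hP'
    set idx : ℕ → ℕ := fun k =>
      Nat.rec 0 (fun n ih => max (MF n ih) (NF n ih) + 1) k with hidxdef
    have hidx : ∀ k, idx (k + 1) = max (MF k (idx k)) (NF k (idx k)) + 1 := fun k => rfl
    set Nk : ℕ → ℕ := fun k => NF k (idx k) with hNkdef
    set wk : ℕ → H := fun k => wF k (idx k) with hwkdef
    set ek : ℕ → H := fun k => eF k (idx k) with hekdef
    set Mk : ℕ → ℕ := fun k => max (MF k (idx k)) (NF k (idx k)) with hMkdef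
    have hidxNk : ∀ k, idx k ≤ Nk k := fun k => hNFle k (idx k)
    have hNkMk : ∀ k, Nk k ≤ Mk k := fun k => le_max_right _ _
    have hMkidx : ∀ k, Mk k < idx (k + 1) := fun k => by
      rw [hidx k]; exact Nat.lt_succ_self _
    have hMkNk1 : ∀ k, Mk k < Nk (k + 1) :=
      fun k => lt_of_lt_of_le (hMkidx k) (hidxNk (k + 1))
    have hNkmono : StrictMono Nk := strictMono_nat_of_lt_succ fun k =>
      lt_of_le_of_lt (hNkMk k) (hMkNk1 k)
    have hwn : ∀ k, ‖wk k‖ = 1 := fun k => hw1 k (idx k)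
    have hperp : ∀ k, wk k ∈ (Vs (Nk k))ᗮ := fun k => hw2 k (idx k)
    have hwM : ∀ k, wk k ∈ Vs (Mk k) :=
      fun k => hmono (le_max_left _ _) (hw3 k (idx k))
    have hek : ∀ k, ek k ∈ Vs (Nk k) := fun k => he1 k (idx k)
    have hmatch : ∀ k, ∀ ψ ∈ Vs (Nk k), ⟪A (ek k), ψ⟫ = ⟪A (wk k), ψ⟫ :=
      fun k => he2 k (idx k)
    have hsmall : ∀ k, ‖⟪A (wk k - ek k), wk k⟫‖ ≤ 1 / (k + 1) :=
      fun k => he3 k (idx k)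
    -- the sequence of subspaces
    set V : ℕ → Submodule ℂ H := fun j =>
      Vs j ⊔ Submodule.span ℂ {x | ∃ i, Nk i ≤ j ∧ x = wk i} with hVdef
    have hfinset : ∀ j, {x : H | ∃ i, Nk i ≤ j ∧ x = wk i}.Finite := by
      intro j
      refine Set.Finite.subset ((Set.finite_Iic j).image wk) ?_
      rintro x ⟨i, hi, rfl⟩
      exact ⟨i, Set.mem_Iic.mpr (le_trans hNkmono.le_apply hi), rfl⟩
    have hVfd : ∀ j, FiniteDimensional ℂ (V j) := by
      intro j
      haveI h1 : FiniteDimensional ℂ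
          (Submodule.span ℂ {x : H | ∃ i, Nk i ≤ j ∧ x = wk i}) :=
        FiniteDimensional.span_of_finite ℂ (hfinset j)
      exact Submodule.finiteDimensional_sup _ _
    have hVmono : Monotone V := by
      intro a b hab
      refine sup_le_sup (hmono hab) (Submodule.span_mono ?_)
      rintro x ⟨i, hi, rfl⟩
      exact ⟨i, le_trans hi hab, rfl⟩
    have hwmemV : ∀ k, wk k ∈ V (Nk k) := fun k =>
      Submodule.mem_sup_right (Submodule.subset_span ⟨k, le_refl _, rfl⟩)
    have hVNkle : ∀ k, V (Nk k) ≤ Vs (Nk k) ⊔ (ℂ ∙ wk k) := by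
      intro k
      refine sup_le le_sup_left ?_
      rw [Submodule.span_le]
      rintro x ⟨i, hi, rfl⟩
      have hik : i ≤ k := hNkmono.le_iff_le.mp hi
      rcases lt_or_eq_of_le hik with hlt | heq
      · have h1 : Mk i < Nk k := lt_of_lt_of_le (hMkNk1 i) (hNkmono.monotone hlt)
        exact Submodule.mem_sup_left (hmono (le_of_lt h1) (hwM i))
      · rw [heq]
        exact Submodule.mem_sup_right (Submodule.mem_span_singleton_self _)
    refine ⟨V, hVfd, hVmono, ?_, ?_⟩
    · -- the Galerkin method does not converge for V
      intro hGC
      by_cases hsing : ∀ k₀, ∃ k, k₀ ≤ k ∧ ∃ z, z ≠ 0 ∧ z ∈ V (Nk k) ∧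
          ∀ ψ ∈ V (Nk k), ⟪A z, ψ⟫ = 0
      · obtain ⟨N₀, hN₀⟩ := (hGC 0).1
        obtain ⟨k, hk, z, hz0, hzmem, hzperp⟩ := hsing N₀
        have hlev : N₀ ≤ Nk k := le_trans hk hNkmono.le_apply
        refine hz0 ((hN₀ (Nk k) hlev).unique
          ⟨hzmem, fun ψ hψ => by rw [hzperp ψ hψ, inner_zero_left]⟩
          ⟨zero_mem _, fun ψ hψ => by rw [map_zero]⟩)
      · push_neg at hsing
        obtain ⟨k₀, hk₀⟩ := hsing
        have hinjV : ∀ k, ∀ z ∈ V (Nk (k₀ + k)),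
            (∀ ψ ∈ V (Nk (k₀ + k)), ⟪A z, ψ⟫ = 0) → z = 0 := by
          intro k z hz hzp
          by_contra hz0
          obtain ⟨ψ, hψ, hne⟩ := hk₀ (k₀ + k) (Nat.le_add_right k₀ k) z hz0 hz
          exact hne (hzp ψ hψ)
        have hSex : ∀ k : ℕ, ∃ S : H →L[ℂ] H,
            (∀ g, IsGalerkinSolution A (V (Nk (k₀ + k))) g (S g)) ∧
            ∀ g x, IsGalerkinSolution A (V (Nk (k₀ + k))) g x → x = S g := by
          intro k
          haveI := hVfd (Nk (k₀ + k))
          exact exists_solution_operator A _ (hinjV k)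
        choose SS hSS1 hSS2 using hSex
        have hptw : ∀ g : H, ∃ C, ∀ k, ‖SS k g‖ ≤ C := by
          intro g
          set φ : ℕ → H := fun j =>
            if hj : ∃ x, IsGalerkinSolution A (V j) g x then hj.choose else 0 with hφ
          obtain ⟨N₀, hN₀⟩ := (hGC g).1
          have hev : ∀ᶠ j in atTop, IsGalerkinSolution A (V j) g (φ j) := by
            rw [eventually_atTop]
            refine ⟨N₀, fun j hj => ?_⟩
            have h := (hN₀ j hj).exists
            simp only [hφ, dif_pos h]
            exact h.choose_spec
          have htd := (hGC g).2 φ hev (B g) (hABapp g)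
          have hmono2 : StrictMono (fun k => Nk (k₀ + k)) := fun a b hab =>
            hNkmono (by omega)
          have hcomp : Tendsto (fun k => φ (Nk (k₀ + k))) atTop (nhds (B g)) :=
            htd.comp hmono2.tendsto_atTop
          have heq : ∀ᶠ k in atTop, φ (Nk (k₀ + k)) = SS k g := by
            rw [eventually_atTop]
            refine ⟨N₀, fun k hk => ?_⟩
            have hlev : N₀ ≤ Nk (k₀ + k) :=
              le_trans hk (le_trans (Nat.le_add_left k k₀) hNkmono.le_apply)
            have hEU := hN₀ _ hlev
            have hsol1 : IsGalerkinSolution A (V (Nk (k₀ + k))) g (φ (Nk (k₀ + k))) := by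
              have h := hEU.exists
              simp only [hφ, dif_pos h]
              exact h.choose_spec
            exact hEU.unique hsol1 (hSS1 k g)
          have htd2 : Tendsto (fun k => SS k g) atTop (nhds (B g)) :=
            Filter.Tendsto.congr' heq hcomp
          obtain ⟨C, hC⟩ := htd2.norm.bddAbove_range
          exact ⟨C, fun k => hC (Set.mem_range_self k)⟩
        obtain ⟨C', hC'⟩ := banach_steinhaus hptw
        have hC'0 : 0 ≤ C' := le_trans (norm_nonneg _) (hC' 0)
        obtain ⟨k1, hk1⟩ := exists_nat_gt C'
        set κ := k₀ + k1 with hκdef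
        haveI := hVfd (Nk κ)
        set u : H := wk κ - ek κ with hu
        have hwe : (⟪wk κ, ek κ⟫ : ℂ) = 0 :=
          (Submodule.mem_orthogonal' _ _).mp (hperp κ) (ek κ) (hek κ)
        have hu1 : 1 ≤ ‖u‖ := by
          have h1 := norm_sub_sq (𝕜 := ℂ) (wk κ) (ek κ)
          rw [hwe] at h1
          simp only [map_zero, mul_zero, sub_zero] at h1
          rw [hwn κ] at h1
          nlinarith [norm_nonneg u, norm_nonneg (ek κ), h1]
        have huV : u ∈ V (Nk κ) :=
          Submodule.sub_mem _ (hwmemV κ) (Submodule.mem_sup_left (hek κ))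
        have hAuperp : ∀ v ∈ Vs (Nk κ), ⟪A u, v⟫ = 0 := by
          intro v hv
          rw [hu, map_sub, inner_sub_left, hmatch κ v hv, sub_self]
        have hbnd : ∀ ψ ∈ V (Nk κ), ‖⟪A u, ψ⟫‖ ≤ (1 / (κ + 1)) * ‖ψ‖ := by
          intro ψ hψ
          obtain ⟨v, hv, z, hz, rfl⟩ := Submodule.mem_sup.mp (hVNkle κ hψ)
          obtain ⟨c, rfl⟩ := Submodule.mem_span_singleton.mp hz
          rw [inner_add_right, hAuperp v hv, zero_add, inner_smul_right, norm_mul]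
          have hvw : (⟪v, c • wk κ⟫ : ℂ) = 0 := by
            rw [inner_smul_right,
              (Submodule.mem_orthogonal _ _).mp (hperp κ) v hv, mul_zero]
          have hcle : ‖c‖ ≤ ‖v + c • wk κ‖ := by
            have h2 := norm_add_sq (𝕜 := ℂ) v (c • wk κ)
            rw [hvw] at h2
            simp only [map_zero, mul_zero, add_zero] at h2
            have h3 : ‖c • wk κ‖ = ‖c‖ := by
              rw [norm_smul, hwn κ, mul_one]
            rw [h3] at h2
            nlinarith [norm_nonneg (v + c • wk κ), norm_nonneg c, norm_nonneg v]
          have h4 : ‖(⟪A u, wk κ⟫ : ℂ)‖ ≤ 1 / (κ + 1) := hsmall κ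
          have h5 : (0:ℝ) ≤ 1 / (κ + 1) := by positivity
          calc ‖c‖ * ‖(⟪A u, wk κ⟫ : ℂ)‖ ≤ ‖v + c • wk κ‖ * (1 / (κ + 1)) :=
                mul_le_mul hcle h4 (norm_nonneg _) (norm_nonneg _)
            _ = (1 / (κ + 1)) * ‖v + c • wk κ‖ := by ring
        set g₁ : H := ↑(Submodule.orthogonalProjectionOnto (V (Nk κ)) (A u)) with hg₁
        have hg₁mem : g₁ ∈ V (Nk κ) := (Submodule.orthogonalProjectionOnto (V (Nk κ)) (A u)).2
        have hg₁perp : ∀ ψ ∈ V (Nk κ), (⟪A u - g₁, ψ⟫ : ℂ) = 0 := by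
          intro ψ hψ
          exact (Submodule.mem_orthogonal' _ _).mp
            (Submodule.sub_starProjection_mem_orthogonal (A u)) ψ hψ
        have hgsol : IsGalerkinSolution A (V (Nk κ)) g₁ u := by
          refine ⟨huV, fun ψ hψ => ?_⟩
          have h := hg₁perp ψ hψ
          rw [inner_sub_left] at h
          exact sub_eq_zero.mp h
        have hgnorm : ‖g₁‖ ≤ 1 / (κ + 1) := by
          rcases eq_or_ne g₁ 0 with h0 | h0
          · rw [h0, norm_zero]; positivity
          · have hgn0 : 0 < ‖g₁‖ := norm_pos_iff.mpr h0
            have h2 : (⟪g₁, g₁⟫ : ℂ) = ⟪A u, g₁⟫ := by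
              have h := hg₁perp g₁ hg₁mem
              rw [inner_sub_left] at h
              exact (sub_eq_zero.mp h).symm
            have h3 : ‖g₁‖ * ‖g₁‖ = RCLike.re (⟪g₁, g₁⟫ : ℂ) :=
              (inner_self_eq_norm_mul_norm g₁).symm
            have h4 : RCLike.re (⟪g₁, g₁⟫ : ℂ) ≤ ‖(⟪A u, g₁⟫ : ℂ)‖ := by
              rw [h2]; exact RCLike.re_le_norm _
            have h5 := hbnd g₁ hg₁mem
            have h6 : ‖g₁‖ * ‖g₁‖ ≤ (1 / (κ + 1)) * ‖g₁‖ := by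
              rw [h3]; exact le_trans h4 h5
            exact le_of_mul_le_mul_right (by linarith [h6]) hgn0
        have hueq : u = SS k1 g₁ := hSS2 k1 g₁ u hgsol
        have hfinal : ‖u‖ ≤ C' * (1 / (κ + 1)) := by
          rw [hueq]
          calc ‖SS k1 g₁‖ ≤ ‖SS k1‖ * ‖g₁‖ := (SS k1).le_opNorm _
            _ ≤ C' * (1 / (κ + 1)) :=
              mul_le_mul (hC' k1) hgnorm (norm_nonneg _) hC'0
        have hlt : C' * (1 / (κ + 1)) < 1 := by
          have hκk : C' < (κ : ℝ) + 1 := by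
            have h7 : (k1 : ℝ) ≤ (κ : ℝ) := by
              rw [hκdef]; push_cast; linarith [Nat.le_add_left k1 k₀,
                (by exact_mod_cast Nat.le_add_left k1 k₀ : (k1:ℝ) ≤ (k₀ + k1 : ℕ))]
            linarith [hk1]
          rw [mul_one_div, div_lt_one (by positivity : (0:ℝ) < (κ:ℝ) + 1)]
          exact hκk
        linarith
    · -- the sandwich property
      intro N
      refine ⟨le_sup_left, max N (Finset.sup (Finset.range (N + 1)) Mk), ?_⟩
      refine sup_le (hmono (le_max_left _ _)) ?_
      rw [Submodule.span_le]
      rintro x ⟨i, hiN, rfl⟩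
      have hi : i ≤ N := le_trans hNkmono.le_apply hiN
      have hMi : Mk i ≤ max N (Finset.sup (Finset.range (N + 1)) Mk) :=
        le_trans (Finset.le_sup (Finset.mem_range.mpr (Nat.lt_succ_of_le hi)))
          (le_max_right _ _)
      exact hmono hMi (hwM i)

  · -- A is coercive plus compact: contradiction
    exfalso
    push_neg at hP
    obtain ⟨ε, hε, N', hN'⟩ := hP
    set N'' := max N' Nstar with hN''def
    by_cases htop : Vs N'' = ⊤
    · -- H is finite dimensional
      haveI : FiniteDimensional ℂ H := Module.Finite.equiv (LinearEquiv.ofTop _ htop)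
      refine hnc ⟨1, A - 1, ⟨1, one_pos, fun φ => ?_⟩, ?_, by abel⟩
      · calc (1:ℝ) * ‖φ‖ ^ 2 = ‖φ‖ * ‖φ‖ := by ring
          _ = RCLike.re ⟪(1 : H →L[ℂ] H) φ, φ⟫ := by
              rw [ContinuousLinearMap.one_apply]
              exact (inner_self_eq_norm_mul_norm φ).symm
          _ ≤ ‖⟪(1 : H →L[ℂ] H) φ, φ⟫‖ := RCLike.re_le_norm _
      · exact isCompactOperator_of_range_le (A - 1) ⊤ (fun x => trivial)
    · obtain ⟨S, hS1, hS2⟩ := exists_solution_operator A (Vs N'')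
        (hinjVs N'' (le_max_right _ _))
      set T : H →L[ℂ] H := A - A.comp (S.comp A) with hT
      set P : H →L[ℂ] H := (Vs N'').subtypeL.comp
        (Submodule.orthogonalProjectionOnto (Vs N'')) with hPdef
      set Q : H →L[ℂ] H := ContinuousLinearMap.id ℂ H - P with hQdef
      have hPmem : ∀ x, P x ∈ Vs N'' := fun x => (Submodule.orthogonalProjectionOnto (Vs N'') x).2
      have hQx : ∀ x : H, Q x = x - P x := fun x => rfl
      have hQmem : ∀ x, Q x ∈ (Vs N'')ᗮ := fun x =>
        Submodule.sub_starProjection_mem_orthogonal x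
      have hQid : ∀ w ∈ (Vs N'')ᗮ, Q w = w := by
        intro w hw
        have h0 : Submodule.orthogonalProjectionOnto (Vs N'') w = 0 :=
          Submodule.orthogonalProjectionOnto_apply_of_mem_orthogonal hw
        rw [hQx, hPdef]
        simp [h0]
      have hTapp : ∀ w : H, T w = A (w - S (A w)) := by
        intro w
        rw [hT, map_sub]
        simp
      -- the ε-bound on the orthogonal complement
      have hTbound : ∀ w ∈ (Vs N'')ᗮ, ε * ‖w‖ ^ 2 ≤ ‖⟪T w, w⟫‖ := by
        have hclosed : IsClosed {x : H | ε * ‖Q x‖ ^ 2 ≤ ‖⟪T (Q x), Q x⟫‖} := by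
          apply isClosed_le
          · fun_prop
          · exact (Continuous.inner (T.continuous.comp Q.continuous) Q.continuous).norm
        have hsub : (⋃ N, (Vs N : Set H)) ⊆
            {x : H | ε * ‖Q x‖ ^ 2 ≤ ‖⟪T (Q x), Q x⟫‖} := by
          intro v hv
          obtain ⟨sN, hsN⟩ := Set.mem_iUnion.mp hv
          have hvM : v ∈ Vs (max sN N'') := hmono (le_max_left _ _) hsN
          rcases eq_or_ne (Q v) 0 with h0 | h0
          · simp [Set.mem_setOf_eq, h0]
          · have hQvM : Q v ∈ Vs (max sN N'') := by
              rw [hQx]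
              exact Submodule.sub_mem _ hvM (hmono (le_max_right _ _) (hPmem v))
            have hQvperp : Q v ∈ (Vs N'')ᗮ := hQmem v
            have hQvn : 0 < ‖Q v‖ := norm_pos_iff.mpr h0
            set w' : H := ((‖Q v‖⁻¹ : ℝ) : ℂ) • Q v with hw'
            have hw'n : ‖w'‖ = 1 := by
              rw [hw', norm_smul, Complex.norm_real, Real.norm_eq_abs, abs_inv, abs_norm]
              field_simp
            have hw'perp : w' ∈ (Vs N'')ᗮ := Submodule.smul_mem _ _ hQvperp
            have hw'M : w' ∈ Vs (max sN N'') := Submodule.smul_mem _ _ hQvM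
            have he'mem : S (A w') ∈ Vs N'' := (hS1 (A w')).1
            have he'match : ∀ ψ ∈ Vs N'', ⟪A (S (A w')), ψ⟫ = ⟪A w', ψ⟫ :=
              (hS1 (A w')).2
            have hkey := hN' N'' (le_max_left _ _) w' (max sN N'') (S (A w')) hw'n
              hw'perp hw'M he'mem he'match
            have hTw' : ⟪T w', w'⟫ = ⟪A (w' - S (A w')), w'⟫ := by rw [hTapp]
            have hscale : ⟪T w', w'⟫ = (((‖Q v‖⁻¹ ^ 2 : ℝ)) : ℂ) * ⟪T (Q v), Q v⟫ := by
              rw [hw', map_smul, inner_smul_left, inner_smul_right, Complex.conj_ofReal]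
              push_cast
              ring
            have hval : ε < (‖Q v‖⁻¹ ^ 2) * ‖⟪T (Q v), Q v⟫‖ := by
              have h1 : ‖⟪T w', w'⟫‖ = (‖Q v‖⁻¹ ^ 2) * ‖⟪T (Q v), Q v⟫‖ := by
                rw [hscale, norm_mul, Complex.norm_real, Real.norm_eq_abs,
                  abs_of_nonneg (by positivity)]
              rw [← h1]
              rw [hTw'] at *
              exact lt_of_lt_of_le hkey (le_of_eq rfl)
            rw [Set.mem_setOf_eq]
            have h2 : (‖Q v‖⁻¹ ^ 2) * ‖Q v‖ ^ 2 = 1 := by field_simp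
            nlinarith [hval, sq_nonneg ‖Q v‖, norm_nonneg (⟪T (Q v), Q v⟫ : ℂ)]
        intro w hw
        have hx : w ∈ closure (⋃ N, (Vs N : Set H)) := hdense w
        have hmem := (hclosed.closure_subset_iff.mpr hsub) hx
        rw [Set.mem_setOf_eq, hQid w hw] at hmem
        exact hmem
      -- a unit vector in the orthogonal complement
      have hperpne : ∃ w₀ ∈ (Vs N'')ᗮ, ‖w₀‖ = 1 := by
        have hne : (Vs N'')ᗮ ≠ ⊥ := fun hbot =>
          htop ((Submodule.orthogonal_eq_bot_iff).mp hbot)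
        obtain ⟨v, hv, hv0⟩ := Submodule.exists_mem_ne_zero_of_ne_bot hne
        have hvn : 0 < ‖v‖ := norm_pos_iff.mpr hv0
        refine ⟨((‖v‖⁻¹ : ℝ) : ℂ) • v, Submodule.smul_mem _ _ hv, ?_⟩
        rw [norm_smul, Complex.norm_real, Real.norm_eq_abs, abs_inv, abs_norm]
        field_simp
      obtain ⟨μ, hμn, hμ⟩ := exists_halfplane T ((Vs N'')ᗮ) hε hperpne
        (fun w hw hn => by
          have := hTbound w hw
          rw [hn] at this
          simpa using this)
      -- the coercive part
      set A₀ : H →L[ℂ] H := Q.comp (T.comp Q) + ((ε : ℂ) * μ) • P with hA₀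
      have hQadj : ∀ a b : H, ⟪Q a, b⟫ = ⟪a, Q b⟫ := by
        intro a b
        rw [hQx a, hQx b, inner_sub_left, inner_sub_right, hPdef]
        have : ⟪(Submodule.orthogonalProjectionOnto (Vs N'') a : H), b⟫ =
            ⟪a, (Submodule.orthogonalProjectionOnto (Vs N'') b : H)⟫ :=
          Submodule.inner_starProjection_left_eq_right (Vs N'') a b
        simp only [ContinuousLinearMap.comp_apply, Submodule.subtypeL_apply]
        rw [this]
      have hPQinner : ∀ φ : H, ⟪P φ, Q φ⟫ = 0 := by
        intro φ
        have := (Submodule.mem_orthogonal _ _).mp (hQmem φ) (P φ) (hPmem φ)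
        exact this
      have hPre : ∀ φ : H, RCLike.re ⟪P φ, φ⟫ = ‖P φ‖ ^ 2 := by
        intro φ
        have hsplit : (φ : H) = P φ + Q φ := by rw [hQx]; abel
        calc RCLike.re ⟪P φ, φ⟫ = RCLike.re ⟪P φ, P φ + Q φ⟫ := by rw [← hsplit]
          _ = RCLike.re (⟪P φ, P φ⟫ + ⟪P φ, Q φ⟫) := by rw [inner_add_right]
          _ = RCLike.re ⟪P φ, P φ⟫ := by rw [hPQinner, add_zero]
          _ = ‖P φ‖ * ‖P φ‖ := inner_self_eq_norm_mul_norm _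
          _ = ‖P φ‖ ^ 2 := by ring
      have hPim : ∀ φ : H, (⟪P φ, φ⟫ : ℂ).im = 0 := by
        intro φ
        have hsplit : (φ : H) = P φ + Q φ := by rw [hQx]; abel
        have h4 : ⟪P φ, P φ⟫ + ⟪P φ, Q φ⟫ = (⟪P φ, φ⟫ : ℂ) := by
          rw [← inner_add_right, ← hsplit]
        have h5 : (⟪P φ, φ⟫ : ℂ) = ⟪P φ, P φ⟫ := by
          rw [← h4, hPQinner, add_zero]
        rw [h5]
        have h6 := inner_self_im (𝕜 := ℂ) (P φ)
        simp only [RCLike.im_to_complex] at h6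
        exact h6
      have hpyth : ∀ φ : H, ‖φ‖ ^ 2 = ‖P φ‖ ^ 2 + ‖Q φ‖ ^ 2 := by
        intro φ
        have hsplit : (φ : H) = P φ + Q φ := by rw [hQx]; abel
        calc ‖φ‖ ^ 2 = ‖P φ + Q φ‖ ^ 2 := by rw [← hsplit]
          _ = ‖P φ‖ ^ 2 + 2 * RCLike.re ⟪P φ, Q φ⟫ + ‖Q φ‖ ^ 2 := norm_add_sq _ _
          _ = ‖P φ‖ ^ 2 + ‖Q φ‖ ^ 2 := by rw [hPQinner]; simp
      have hμc : μ * (starRingEnd ℂ) ((ε : ℂ) * μ) = (ε : ℂ) := by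
        rw [map_mul, Complex.conj_ofReal]
        rw [show μ * ((ε:ℂ) * (starRingEnd ℂ) μ) = (ε:ℂ) * (μ * (starRingEnd ℂ) μ) from by
          ring, Complex.mul_conj]
        have : Complex.normSq μ = 1 := by
          have h1 : ‖μ‖ ^ 2 = 1 := by rw [hμn]; norm_num
          rw [Complex.normSq_eq_norm_sq]
          exact h1
        rw [this]
        simp
      have hcoer : Coercive A₀ := by
        refine ⟨ε, hε, fun φ => ?_⟩
        have hval : ⟪A₀ φ, φ⟫ = ⟪T (Q φ), Q φ⟫ +
            (starRingEnd ℂ) ((ε : ℂ) * μ) * ⟪P φ, φ⟫ := by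
          rw [hA₀]
          simp only [ContinuousLinearMap.add_apply, ContinuousLinearMap.comp_apply,
            ContinuousLinearMap.smul_apply]
          rw [inner_add_left, inner_smul_left, hQadj]
        have hre : ε * ‖φ‖ ^ 2 ≤ (μ * ⟪A₀ φ, φ⟫).re := by
          rw [hval, mul_add, ← mul_assoc, hμc]
          rw [Complex.add_re]
          have h1 : ε * ‖Q φ‖ ^ 2 ≤ (μ * ⟪T (Q φ), Q φ⟫).re := hμ (Q φ) (hQmem φ)
          have h2 : ((ε : ℂ) * ⟪P φ, φ⟫).re = ε * ‖P φ‖ ^ 2 := by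
            rw [Complex.re_ofReal_mul]
            congr 1
            have := hPre φ
            simpa using this
          rw [h2, hpyth φ]
          have h3 := hμ (Q φ) (hQmem φ)
          linarith
        calc ε * ‖φ‖ ^ 2 ≤ (μ * ⟪A₀ φ, φ⟫).re := hre
          _ ≤ ‖μ * ⟪A₀ φ, φ⟫‖ := Complex.re_le_norm _
          _ = ‖μ‖ * ‖⟪A₀ φ, φ⟫‖ := norm_mul _ _
          _ = ‖⟪A₀ φ, φ⟫‖ := by rw [hμn, one_mul]
      -- the compact part
      have hKmem : ∀ x : H, (A - A₀) x ∈
          Vs N'' ⊔ Submodule.map (A : H →ₗ[ℂ] H) (Vs N'') := by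
        intro x
        have hx1 : (A - A₀) x = A (P x) + A (S (A (Q x)))
            + P (A (Q x) - A (S (A (Q x)))) - ((ε : ℂ) * μ) • P x := by
          have e1 : (A - A₀) x = A x - Q (T (Q x)) - ((ε : ℂ) * μ) • P x := by
            rw [hA₀]
            simp only [ContinuousLinearMap.sub_apply, ContinuousLinearMap.add_apply,
              ContinuousLinearMap.comp_apply, ContinuousLinearMap.smul_apply]
            abel
          have e2 : Q (T (Q x)) = T (Q x) - P (T (Q x)) := hQx _
          have e3 : T (Q x) = A (Q x) - A (S (A (Q x))) := by
            rw [hTapp, map_sub]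
          have e4 : A x - A (Q x) = A (P x) := by
            rw [← map_sub]
            congr 1
            rw [hQx]
            abel
          rw [e1, e2, e3]
          rw [show A x - (A (Q x) - A (S (A (Q x))) - P (A (Q x) - A (S (A (Q x)))))
              - ((ε : ℂ) * μ) • P x
            = (A x - A (Q x)) + A (S (A (Q x))) + P (A (Q x) - A (S (A (Q x))))
              - ((ε : ℂ) * μ) • P x from by abel, e4]
        rw [hx1]
        have m1 : A (P x) ∈ Submodule.map (A : H →ₗ[ℂ] H) (Vs N'') :=
          ⟨P x, hPmem x, rfl⟩
        have m2 : A (S (A (Q x))) ∈ Submodule.map (A : H →ₗ[ℂ] H) (Vs N'') :=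
          ⟨S (A (Q x)), (hS1 _).1, rfl⟩
        have m3 : P (T (Q x)) ∈ Vs N'' := hPmem _
        have m4 : ((ε : ℂ) * μ) • P x ∈ Vs N'' := Submodule.smul_mem _ _ (hPmem x)
        exact Submodule.sub_mem _
          (Submodule.add_mem _
            (Submodule.add_mem _ (Submodule.mem_sup_right m1) (Submodule.mem_sup_right m2))
            (Submodule.mem_sup_left m3))
          (Submodule.mem_sup_left m4)
      haveI : FiniteDimensional ℂ (Submodule.map (A : H →ₗ[ℂ] H) (Vs N'')) :=
        Module.Finite.map _ _
      exact hnc ⟨A₀, A - A₀, hcoer,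
        isCompactOperator_of_range_le _ _ hKmem, by abel⟩
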